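/- Let μ be a probability measure on ℝ^d with finite second moment and let x ∈ ℝ^d. Then d^K_μ(x) = D_K(μ, δ_x) ≤ √(∫ ‖p − x‖² dμ(p)) = W₂(μ, δ_x), and equality holds if and only if μ is the Dirac measure δ_x. -/

import Mathlib

open MeasureTheory

noncomputable def gaussK {d : ℕ} (σ : ℝ) (p x : EuclideanSpace ℝ (Fin d)) : ℝ :=
  σ ^ 2 * Real.exp (-‖p - x‖ ^ 2 / (2 * σ ^ 2))

noncomputable def kde {d : ℕ} (σ : ℝ) (μ : Measure (EuclideanSpace ℝ (Fin d)))
    (x : EuclideanSpace ℝ (Fin d)) : ℝ :=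
  ∫ p, gaussK σ p x ∂μ

noncomputable def kap {d : ℕ} (σ : ℝ) (μ ν : Measure (EuclideanSpace ℝ (Fin d))) : ℝ :=
  ∫ p, ∫ q, gaussK σ p q ∂ν ∂μ

noncomputable def DK {d : ℕ} (σ : ℝ) (μ ν : Measure (EuclideanSpace ℝ (Fin d))) : ℝ :=
  Real.sqrt (kap σ μ μ + kap σ ν ν - 2 * kap σ μ ν)

/-- kernel distance from a measure to a point -/
noncomputable def dKmu {d : ℕ} (σ : ℝ) (μ : Measure (EuclideanSpace ℝ (Fin d)))
    (x : EuclideanSpace ℝ (Fin d)) : ℝ :=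
  DK σ μ (Measure.dirac x)

/-- kernel distance between two points -/
noncomputable def DKpt {d : ℕ} (σ : ℝ) (p q : EuclideanSpace ℝ (Fin d)) : ℝ :=
  DK σ (Measure.dirac p) (Measure.dirac q)

/-- kernel power distance with respect to a finite nonempty point set `P` -/
noncomputable def Kpow {d : ℕ} (σ : ℝ) (P : Finset (EuclideanSpace ℝ (Fin d)))
    (hP : P.Nonempty) (μ : Measure (EuclideanSpace ℝ (Fin d)))
    (x : EuclideanSpace ℝ (Fin d)) : ℝ :=
  Real.sqrt (P.inf' hP fun p => DKpt σ p x ^ 2 + dKmu σ μ p ^ 2)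

lemma eq_dirac_of_compl_singleton {α : Type*} [MeasurableSpace α] [MeasurableSingletonClass α]
    (μ : Measure α) [IsProbabilityMeasure μ] (x : α) (h : μ {x}ᶜ = 0) :
    μ = Measure.dirac x := by
  have hx : μ {x} = 1 := by
    have h2 := measure_add_measure_compl (μ := μ) (MeasurableSet.singleton x)
    rw [h, add_zero] at h2
    simpa using h2
  ext s hs
  rw [Measure.dirac_apply' _ hs]
  by_cases hxs : x ∈ s
  · have h1 : μ s = 1 :=
      le_antisymm prob_le_one (hx ▸ measure_mono (Set.singleton_subset_iff.2 hxs))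
    simp [h1, Set.indicator_of_mem hxs]
  · have hle : μ s ≤ μ {x}ᶜ := measure_mono (by
      intro y hy
      simp only [Set.mem_compl_iff, Set.mem_singleton_iff]
      rintro rfl; exact hxs hy)
    simp [Set.indicator_of_notMem hxs, le_antisymm (hle.trans_eq h) zero_le]

lemma gauss_key_le (σ n : ℝ) (hσ2 : 0 < σ ^ 2) :
    2 * σ ^ 2 - 2 * (σ ^ 2 * Real.exp (-n / (2 * σ ^ 2))) ≤ n := by
  have htt : 2 * σ ^ 2 * (n / (2 * σ ^ 2)) = n := by have hσ0 : σ ≠ 0 := (fun h => by simp [h] at hσ2); field_simp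
  have h := Real.add_one_le_exp (-(n / (2 * σ ^ 2)))
  have h2 := mul_le_mul_of_nonneg_left h hσ2.le
  rw [neg_div]
  nlinarith [h2, htt]

lemma gauss_key_lt (σ n : ℝ) (hσ2 : 0 < σ ^ 2) (hn : 0 < n) :
    2 * σ ^ 2 - 2 * (σ ^ 2 * Real.exp (-n / (2 * σ ^ 2))) < n := by
  have htt : 2 * σ ^ 2 * (n / (2 * σ ^ 2)) = n := by have hσ0 : σ ≠ 0 := (fun h => by simp [h] at hσ2); field_simp
  have hpos : 0 < n / (2 * σ ^ 2) := div_pos hn (by linarith)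
  have h := Real.add_one_lt_exp (neg_lt_zero.mpr hpos).ne
  have h2 := mul_lt_mul_of_pos_left h hσ2
  rw [neg_div]
  nlinarith [h2, htt]

/-- For a probability measure `μ` with finite second moment,
`d^K_μ(x) ≤ √(∫ ‖p − x‖² dμ(p)) = W₂(μ, δ_x)`, with equality iff `μ = δ_x`. -/
theorem kernel_distance_le_W2_dirac {d : ℕ} (hd : 1 ≤ d) (σ : ℝ) (hσ : 0 < σ)
    (μ : Measure (EuclideanSpace ℝ (Fin d))) [IsProbabilityMeasure μ]
    (hmom : Integrable (fun p : EuclideanSpace ℝ (Fin d) => ‖p‖ ^ 2) μ)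
    (x : EuclideanSpace ℝ (Fin d)) :
    dKmu σ μ x ≤ Real.sqrt (∫ p, ‖p - x‖ ^ 2 ∂μ) ∧
    (dKmu σ μ x = Real.sqrt (∫ p, ‖p - x‖ ^ 2 ∂μ) ↔ μ = Measure.dirac x) := by
  have hσ2 : (0:ℝ) < σ ^ 2 := by positivity
  have hgK_nonneg : ∀ p q : EuclideanSpace ℝ (Fin d), 0 ≤ gaussK σ p q := by
    intro p q; unfold gaussK; positivity
  have hgK_le : ∀ p q : EuclideanSpace ℝ (Fin d), gaussK σ p q ≤ σ ^ 2 := by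
    intro p q
    unfold gaussK
    have h1 : Real.exp (-‖p - q‖ ^ 2 / (2 * σ ^ 2)) ≤ 1 := by
      rw [Real.exp_le_one_iff]
      apply div_nonpos_of_nonpos_of_nonneg <;> nlinarith [sq_nonneg ‖p - q‖]
    nlinarith
  have hgK_self : ∀ p : EuclideanSpace ℝ (Fin d), gaussK σ p p = σ ^ 2 := by
    intro p; simp [gaussK]
  have hgcont : ∀ p : EuclideanSpace ℝ (Fin d), Continuous (fun q => gaussK σ p q) := by
    intro p; unfold gaussK; fun_prop
  have hgcont' : Continuous (fun p => gaussK σ p x) := by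
    unfold gaussK; fun_prop
  -- integrability facts
  have hg_int : Integrable (fun p => gaussK σ p x) μ := by
    refine Integrable.mono' (integrable_const (σ ^ 2)) hgcont'.aestronglyMeasurable ?_
    filter_upwards with p
    rw [Real.norm_eq_abs, abs_of_nonneg (hgK_nonneg p x)]
    exact hgK_le p x
  have hg_int' : ∀ p, Integrable (fun q => gaussK σ p q) μ := by
    intro p
    refine Integrable.mono' (integrable_const (σ ^ 2)) (hgcont p).aestronglyMeasurable ?_
    filter_upwards with q
    rw [Real.norm_eq_abs, abs_of_nonneg (hgK_nonneg p q)]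
    exact hgK_le p q
  have hK2int : Integrable (fun p : EuclideanSpace ℝ (Fin d) => ‖p - x‖ ^ 2) μ := by
    refine Integrable.mono' ((hmom.const_mul 2).add (integrable_const (2 * ‖x‖ ^ 2)))
      (Continuous.aestronglyMeasurable (by fun_prop)) ?_
    filter_upwards with p
    simp only [Pi.add_apply]
    rw [Real.norm_eq_abs, abs_of_nonneg (by positivity)]
    have h := norm_sub_le p x
    nlinarith [h, sq_nonneg (‖p‖ - ‖x‖), norm_nonneg (p - x), norm_nonneg p, norm_nonneg x]
  -- kap bounds
  have hkap_le : kap σ μ μ ≤ σ ^ 2 := by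
    have hc : ∫ _p : EuclideanSpace ℝ (Fin d), (σ ^ 2 : ℝ) ∂μ = σ ^ 2 := by simp
    rw [kap, ← hc]
    refine integral_mono_of_nonneg ?_ (integrable_const _) ?_
    · filter_upwards with p
      exact integral_nonneg fun q => hgK_nonneg p q
    · filter_upwards with p
      calc ∫ q, gaussK σ p q ∂μ ≤ ∫ _q : EuclideanSpace ℝ (Fin d), (σ ^ 2 : ℝ) ∂μ :=
            integral_mono (hg_int' p) (integrable_const _) fun q => hgK_le p q
        _ = σ ^ 2 := by simp
  -- identify the quantity under the sqrt
  have hdd : kap σ (Measure.dirac x) (Measure.dirac x) = σ ^ 2 := by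
    simp [kap, integral_dirac, hgK_self x]
  have hmd : kap σ μ (Measure.dirac x) = ∫ p, gaussK σ p x ∂μ := by
    simp [kap, integral_dirac]
  set I : ℝ := ∫ p, gaussK σ p x ∂μ with hI
  set A : ℝ := kap σ μ μ + σ ^ 2 - 2 * I with hA
  set B : ℝ := ∫ p, ‖p - x‖ ^ 2 ∂μ with hB
  have hrepr : dKmu σ μ x = Real.sqrt A := by
    rw [dKmu, DK, hdd, hmd]
  -- pointwise inequalities
  have hpt : ∀ p : EuclideanSpace ℝ (Fin d),
      2 * σ ^ 2 - 2 * gaussK σ p x ≤ ‖p - x‖ ^ 2 := by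
    intro p
    simpa [gaussK] using gauss_key_le σ (‖p - x‖ ^ 2) hσ2
  have hsub_int : Integrable (fun p => 2 * σ ^ 2 - 2 * gaussK σ p x) μ :=
    (integrable_const _).sub (hg_int.const_mul 2)
  have hsub_eq : ∫ p, (2 * σ ^ 2 - 2 * gaussK σ p x) ∂μ = 2 * σ ^ 2 - 2 * I := by
    rw [integral_sub (integrable_const _) (hg_int.const_mul 2), integral_const,
      probReal_univ, integral_const_mul]
    simp [hI]
  have hmain : 2 * σ ^ 2 - 2 * I ≤ B := by
    rw [← hsub_eq, hB]
    exact integral_mono hsub_int hK2int hpt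
  have hAB : A ≤ B := by
    rw [hA]
    nlinarith [hkap_le, hmain]
  refine ⟨by rw [hrepr]; exact Real.sqrt_le_sqrt hAB, ?_, ?_⟩
  · -- equality implies μ = dirac x
    intro heq
    by_contra hne
    have hcompl : μ {x}ᶜ ≠ 0 := fun h0 => hne (eq_dirac_of_compl_singleton μ x h0)
    set f : EuclideanSpace ℝ (Fin d) → ℝ :=
      fun p => ‖p - x‖ ^ 2 - (2 * σ ^ 2 - 2 * gaussK σ p x) with hf
    have hf_nonneg : 0 ≤ f := fun p => sub_nonneg.2 (hpt p)
    have hf_int : Integrable f μ := hK2int.sub hsub_int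
    have hf_supp : Function.support f = {x}ᶜ := by
      ext p
      simp only [Function.support, Set.mem_setOf_eq, Set.mem_compl_iff, Set.mem_singleton_iff]
      constructor
      · rintro hfp rfl
        apply hfp
        simp [hf, hgK_self p]
      · intro hpx
        have hn : (0:ℝ) < ‖p - x‖ := norm_pos_iff.2 (sub_ne_zero.2 hpx)
        have h := gauss_key_lt σ (‖p - x‖ ^ 2) hσ2 (by positivity)
        have : 0 < f p := by
          simp only [hf, gaussK]
          linarith
        exact ne_of_gt this
    have hf_pos : 0 < ∫ p, f p ∂μ := by
      rw [integral_pos_iff_support_of_nonneg hf_nonneg hf_int, hf_supp]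
      exact pos_iff_ne_zero.mpr hcompl
    have hf_eq : ∫ p, f p ∂μ = B - (2 * σ ^ 2 - 2 * I) := by
      rw [hf]
      rw [integral_sub hK2int hsub_int, hsub_eq]
    have hAB' : A < B := by
      rw [hA]
      nlinarith [hkap_le, hf_pos, hf_eq]
    have hBpos : 0 < B := by
      have : ∫ p, f p ∂μ ≤ B := by
        rw [hB]
        refine integral_mono hf_int hK2int fun p => ?_
        have h1 : 0 ≤ 2 * σ ^ 2 - 2 * gaussK σ p x := by nlinarith [hgK_le p x]
        simp only [hf]; linarith
      linarith
    rw [hrepr] at heq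
    have hsB : 0 < Real.sqrt B := Real.sqrt_pos.2 hBpos
    have hsA : 0 < Real.sqrt A := heq ▸ hsB
    have hA0 : 0 < A := Real.sqrt_pos.1 hsA
    have : Real.sqrt A < Real.sqrt B := Real.sqrt_lt_sqrt hA0.le hAB'
    linarith [heq ▸ this]
  · -- μ = dirac x implies equality
    rintro rfl
    have hI' : I = σ ^ 2 := by
      rw [hI, integral_dirac, hgK_self x]
    have hkapd : kap σ (Measure.dirac x) (Measure.dirac x) = σ ^ 2 := hdd
    have hB' : B = 0 := by
      rw [hB, integral_dirac]
      simp
    rw [hrepr, hA, hI', hkapd, hB']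
    rw [show σ ^ 2 + σ ^ 2 - 2 * σ ^ 2 = (0:ℝ) by ring]
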